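/- arXiv:2011.04765 — 5 statements merged into one kernel-verified Lean document; each statement's English description precedes it below -/
import Mathlib

section
/- Let $y$ be a nontrivial twice differentiable solution of $(r y')' + \lambda w y = 0$ on an open interval $(a,b)$, where $r, w : (a,b) \to \mathbb{R}$ are continuous with $r > 0$, $w > 0$, and $\lambda > 0$. Then strictly between any two consecutive zeros of $y$ there is exactly one point where $y' = 0$. -/
open Set Filter

/-- Between any two consecutive zeros of a nontrivial solution of the
zero-potential Sturm-Liouville equation `(r y')' + λ w y = 0` there is
exactly one stationary point. -/
theorem stmt_0 (a b : ℝ) (hab : a < b) (r w y : ℝ → ℝ) (lam : ℝ)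
    (hr : ContinuousOn r (Ioo a b)) (hrpos : ∀ t ∈ Ioo a b, 0 < r t)
    (hw : ContinuousOn w (Ioo a b)) (hwpos : ∀ t ∈ Ioo a b, 0 < w t)
    (hlam : 0 < lam)
    (hy : ∀ t ∈ Ioo a b, DifferentiableAt ℝ y t)
    (hy' : ∀ t ∈ Ioo a b, DifferentiableAt ℝ (deriv y) t)
    (hry' : ∀ t ∈ Ioo a b, DifferentiableAt ℝ (fun s => r s * deriv y s) t)
    (hode : ∀ t ∈ Ioo a b,
      deriv (fun s => r s * deriv y s) t + lam * w t * y t = 0)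
    (hnontriv : ∃ t ∈ Ioo a b, y t ≠ 0)
    (t₁ t₂ : ℝ) (ht₁ : t₁ ∈ Ioo a b) (ht₂ : t₂ ∈ Ioo a b) (h12 : t₁ < t₂)
    (hz₁ : y t₁ = 0) (hz₂ : y t₂ = 0)
    (hconsec : ∀ t ∈ Ioo t₁ t₂, y t ≠ 0) :
    ∃! t, t ∈ Ioo t₁ t₂ ∧ deriv y t = 0 := by
  have hsubIcc : Icc t₁ t₂ ⊆ Ioo a b := Icc_subset_Ioo ht₁.1 ht₂.2
  have hsub : Ioo t₁ t₂ ⊆ Ioo a b := fun t ht => hsubIcc (Ioo_subset_Icc_self ht)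
  have hycont : ContinuousOn y (Icc t₁ t₂) := fun t ht =>
    (hy t (hsubIcc ht)).continuousAt.continuousWithinAt
  obtain ⟨c, hc, hc0⟩ := exists_deriv_eq_zero h12 hycont (hz₁.trans hz₂.symm)
  set g : ℝ → ℝ := fun s => r s * deriv y s with hg
  -- key: no two distinct stationary points
  have key : ∀ u v, u ∈ Ioo t₁ t₂ → v ∈ Ioo t₁ t₂ → u < v →
      deriv y u = 0 → deriv y v = 0 → False := by
    intro u v hu hv huv hu0 hv0
    have hIcc : Icc u v ⊆ Ioo t₁ t₂ := Icc_subset_Ioo hu.1 hv.2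
    have hIab : Icc u v ⊆ Ioo a b := fun t ht => hsub (hIcc ht)
    have hycont' : ContinuousOn y (Icc u v) := fun t ht =>
      (hy t (hIab ht)).continuousAt.continuousWithinAt
    -- y has constant sign on Icc u v
    have hsign : (∀ t ∈ Icc u v, 0 < y t) ∨ (∀ t ∈ Icc u v, y t < 0) := by
      by_contra h
      push_neg at h
      obtain ⟨⟨p, hp, hp0⟩, q, hq, hq0⟩ := h
      have hpneg : y p < 0 := lt_of_le_of_ne hp0 (hconsec p (hIcc hp))
      have hqpos : 0 < y q := lt_of_le_of_ne hq0 (Ne.symm (hconsec q (hIcc hq)))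
      have hcont : ContinuousOn y (uIcc p q) :=
        hycont'.mono (uIcc_subset_Icc hp hq)
      have h0 : (0:ℝ) ∈ uIcc (y p) (y q) := by
        rw [mem_uIcc]; left; exact ⟨hpneg.le, hqpos.le⟩
      obtain ⟨z, hz, hz0⟩ := intermediate_value_uIcc hcont h0
      exact hconsec z (hIcc (uIcc_subset_Icc hp hq hz)) hz0
    have hgcont : ContinuousOn g (Icc u v) := fun t ht =>
      (hry' t (hIab ht)).continuousAt.continuousWithinAt
    have hgu : g u = 0 := by simp [hg, hu0]
    have hgv : g v = 0 := by simp [hg, hv0]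
    have hderiv : ∀ t ∈ Ioo u v, deriv g t = -(lam * w t * y t) := by
      intro t ht
      have := hode t (hIab (Ioo_subset_Icc_self ht))
      linarith
    rcases hsign with hpos | hneg
    · have : StrictAntiOn g (Icc u v) := by
        apply strictAntiOn_of_deriv_neg (convex_Icc u v) hgcont
        intro t ht
        rw [interior_Icc] at ht
        rw [hderiv t ht]
        have hw' := hwpos t (hIab (Ioo_subset_Icc_self ht))
        have hy'' := hpos t (Ioo_subset_Icc_self ht)
        have := mul_pos (mul_pos hlam hw') hy''
        linarith
      have := this (left_mem_Icc.2 huv.le) (right_mem_Icc.2 huv.le) huv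
      rw [hgu, hgv] at this; exact lt_irrefl 0 this
    · have : StrictMonoOn g (Icc u v) := by
        apply strictMonoOn_of_deriv_pos (convex_Icc u v) hgcont
        intro t ht
        rw [interior_Icc] at ht
        rw [hderiv t ht]
        have hw' := hwpos t (hIab (Ioo_subset_Icc_self ht))
        have hy'' := hneg t (Ioo_subset_Icc_self ht)
        have := mul_pos (mul_pos hlam hw') (neg_pos.2 hy'')
        nlinarith
      have := this (left_mem_Icc.2 huv.le) (right_mem_Icc.2 huv.le) huv
      rw [hgu, hgv] at this; exact lt_irrefl 0 this
  refine ⟨c, ⟨hc, hc0⟩, ?_⟩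
  rintro d ⟨hd, hd0⟩
  rcases lt_trichotomy d c with h | h | h
  · exact absurd (key d c hd hc h hd0 hc0) id
  · exact h
  · exact absurd (key c d hc hd h hc0 hd0) id
end

section
/- Let $y$ be a nontrivial twice differentiable solution of $(r y')' + (\lambda w - q) y = 0$ on $(a,b)$ with $r, w, q$ continuous, $r > 0$, and $\lambda w(t) - q(t) > 0$ for all $t \in (a,b)$. Then strictly between any two consecutive stationary points of $y$ there is exactly one zero of $y$. -/
open Set Filter

lemma key_lemma (a b : ℝ) (r w q y : ℝ → ℝ) (lam : ℝ)
    (heff : ∀ t ∈ Ioo a b, 0 < lam * w t - q t)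
    (hy : ∀ t ∈ Ioo a b, DifferentiableAt ℝ y t)
    (hry' : ∀ t ∈ Ioo a b, DifferentiableAt ℝ (fun s => r s * deriv y s) t)
    (hode : ∀ t ∈ Ioo a b,
      deriv (fun s => r s * deriv y s) t + (lam * w t - q t) * y t = 0)
    (t₁ t₂ : ℝ) (ht₁ : t₁ ∈ Ioo a b) (ht₂ : t₂ ∈ Ioo a b) (h12 : t₁ < t₂)
    (hs₁ : deriv y t₁ = 0) (hs₂ : deriv y t₂ = 0)
    (hpos : ∀ t ∈ Ioo t₁ t₂, 0 < deriv y t) :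
    y t₁ < 0 ∧ 0 < y t₂ := by
  have hsub : Icc t₁ t₂ ⊆ Ioo a b := Icc_subset_Ioo ht₁.1 ht₂.2
  set g : ℝ → ℝ := fun s => r s * deriv y s with hg
  have hgc : ContinuousOn g (Icc t₁ t₂) := fun t ht =>
    ((hry' t (hsub ht)).continuousAt).continuousWithinAt
  have hyc : ContinuousOn y (Icc t₁ t₂) := fun t ht =>
    ((hy t (hsub ht)).continuousAt).continuousWithinAt
  have hmono : StrictMonoOn y (Icc t₁ t₂) := by
    apply strictMonoOn_of_deriv_pos (convex_Icc _ _) hyc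
    intro t ht
    rw [interior_Icc] at ht
    exact hpos t ht
  have hg₁ : g t₁ = 0 := by simp [hg, hs₁]
  have hg₂ : g t₂ = 0 := by simp [hg, hs₂]
  constructor
  · by_contra h
    push_neg at h
    have hypos : ∀ t ∈ Ioo t₁ t₂, 0 < y t := fun t ht =>
      lt_of_le_of_lt h (hmono (left_mem_Icc.2 h12.le) ⟨ht.1.le, ht.2.le⟩ ht.1)
    have hanti : StrictAntiOn g (Icc t₁ t₂) := by
      apply strictAntiOn_of_deriv_neg (convex_Icc _ _) hgc
      intro t ht
      rw [interior_Icc] at ht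
      have h1 := hode t (hsub ⟨ht.1.le, ht.2.le⟩)
      have h2 := heff t (hsub ⟨ht.1.le, ht.2.le⟩)
      have h3 := hypos t ht
      nlinarith [mul_pos h2 h3]
    have := hanti (left_mem_Icc.2 h12.le) (right_mem_Icc.2 h12.le) h12
    rw [hg₁, hg₂] at this
    exact lt_irrefl 0 this
  · by_contra h
    push_neg at h
    have hyneg : ∀ t ∈ Ioo t₁ t₂, y t < 0 := fun t ht =>
      lt_of_lt_of_le (hmono ⟨ht.1.le, ht.2.le⟩ (right_mem_Icc.2 h12.le) ht.2) h
    have hmon : StrictMonoOn g (Icc t₁ t₂) := by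
      apply strictMonoOn_of_deriv_pos (convex_Icc _ _) hgc
      intro t ht
      rw [interior_Icc] at ht
      have h1 := hode t (hsub ⟨ht.1.le, ht.2.le⟩)
      have h2 := heff t (hsub ⟨ht.1.le, ht.2.le⟩)
      have h3 := hyneg t ht
      nlinarith [mul_pos h2 (neg_pos.2 h3)]
    have := hmon (left_mem_Icc.2 h12.le) (right_mem_Icc.2 h12.le) h12
    rw [hg₁, hg₂] at this
    exact lt_irrefl 0 this

/-- For a nontrivial solution of `(r y')' + (λ w - q) y = 0` with `r > 0` and
`λ w - q > 0`, strictly between any two consecutive stationary points there is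
exactly one zero. -/
theorem stmt_3 (a b : ℝ) (hab : a < b) (r w q y : ℝ → ℝ) (lam : ℝ)
    (hr : ContinuousOn r (Ioo a b)) (hrpos : ∀ t ∈ Ioo a b, 0 < r t)
    (hw : ContinuousOn w (Ioo a b)) (hq : ContinuousOn q (Ioo a b))
    (heff : ∀ t ∈ Ioo a b, 0 < lam * w t - q t)
    (hy : ∀ t ∈ Ioo a b, DifferentiableAt ℝ y t)
    (hy' : ∀ t ∈ Ioo a b, DifferentiableAt ℝ (deriv y) t)
    (hry' : ∀ t ∈ Ioo a b, DifferentiableAt ℝ (fun s => r s * deriv y s) t)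
    (hode : ∀ t ∈ Ioo a b,
      deriv (fun s => r s * deriv y s) t + (lam * w t - q t) * y t = 0)
    (hnontriv : ∃ t ∈ Ioo a b, y t ≠ 0)
    (t₁ t₂ : ℝ) (ht₁ : t₁ ∈ Ioo a b) (ht₂ : t₂ ∈ Ioo a b) (h12 : t₁ < t₂)
    (hs₁ : deriv y t₁ = 0) (hs₂ : deriv y t₂ = 0)
    (hconsec : ∀ t ∈ Ioo t₁ t₂, deriv y t ≠ 0) :
    ∃! t, t ∈ Ioo t₁ t₂ ∧ y t = 0 := by
  have hsub : Icc t₁ t₂ ⊆ Ioo a b := Icc_subset_Ioo ht₁.1 ht₂.2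
  have hyc : ContinuousOn y (Icc t₁ t₂) := fun t ht =>
    ((hy t (hsub ht)).continuousAt).continuousWithinAt
  have hdc : ∀ s ⊆ Icc t₁ t₂, ContinuousOn (deriv y) s := fun s hs t ht =>
    ((hy' t (hsub (hs ht))).continuousAt).continuousWithinAt
  set m : ℝ := (t₁ + t₂) / 2 with hm
  have hmmem : m ∈ Ioo t₁ t₂ := ⟨by linarith, by linarith⟩
  -- constant sign of deriv y on (t₁, t₂)
  have hsign : (∀ t ∈ Ioo t₁ t₂, 0 < deriv y t) ∨ (∀ t ∈ Ioo t₁ t₂, deriv y t < 0) := by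
    rcases (hconsec m hmmem).lt_or_gt with hneg | hpos
    · right
      intro t ht
      by_contra hc
      push_neg at hc
      have htpos : 0 < deriv y t := lt_of_le_of_ne hc (Ne.symm (hconsec t ht))
      rcases lt_trichotomy t m with hlt | heq | hgt
      · have hsub2 : Icc t m ⊆ Icc t₁ t₂ := Icc_subset_Icc ht.1.le hmmem.2.le
        have : (0:ℝ) ∈ deriv y '' Ioo t m :=
          intermediate_value_Ioo' hlt.le (hdc _ hsub2) ⟨hneg, htpos⟩
        obtain ⟨c, hc1, hc2⟩ := this
        exact hconsec c ⟨lt_trans ht.1 hc1.1, lt_trans hc1.2 hmmem.2⟩ hc2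
      · rw [heq] at htpos; linarith
      · have hsub2 : Icc m t ⊆ Icc t₁ t₂ := Icc_subset_Icc hmmem.1.le ht.2.le
        have : (0:ℝ) ∈ deriv y '' Ioo m t :=
          intermediate_value_Ioo hgt.le (hdc _ hsub2) ⟨hneg, htpos⟩
        obtain ⟨c, hc1, hc2⟩ := this
        exact hconsec c ⟨lt_trans hmmem.1 hc1.1, lt_trans hc1.2 ht.2⟩ hc2
    · left
      intro t ht
      by_contra hc
      push_neg at hc
      have htneg : deriv y t < 0 := lt_of_le_of_ne hc (hconsec t ht)
      rcases lt_trichotomy t m with hlt | heq | hgt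
      · have hsub2 : Icc t m ⊆ Icc t₁ t₂ := Icc_subset_Icc ht.1.le hmmem.2.le
        have : (0:ℝ) ∈ deriv y '' Ioo t m :=
          intermediate_value_Ioo hlt.le (hdc _ hsub2) ⟨htneg, hpos⟩
        obtain ⟨c, hc1, hc2⟩ := this
        exact hconsec c ⟨lt_trans ht.1 hc1.1, lt_trans hc1.2 hmmem.2⟩ hc2
      · rw [heq] at htneg; linarith
      · have hsub2 : Icc m t ⊆ Icc t₁ t₂ := Icc_subset_Icc hmmem.1.le ht.2.le
        have : (0:ℝ) ∈ deriv y '' Ioo m t :=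
          intermediate_value_Ioo' hgt.le (hdc _ hsub2) ⟨htneg, hpos⟩
        obtain ⟨c, hc1, hc2⟩ := this
        exact hconsec c ⟨lt_trans hmmem.1 hc1.1, lt_trans hc1.2 ht.2⟩ hc2
  rcases hsign with hpos | hneg
  · -- y strictly increasing
    obtain ⟨hy₁, hy₂⟩ := key_lemma a b r w q y lam heff hy hry' hode t₁ t₂ ht₁ ht₂ h12 hs₁ hs₂ hpos
    have hmono : StrictMonoOn y (Icc t₁ t₂) := by
      apply strictMonoOn_of_deriv_pos (convex_Icc _ _) hyc
      intro t ht; rw [interior_Icc] at ht; exact hpos t ht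
    have : (0:ℝ) ∈ y '' Ioo t₁ t₂ := intermediate_value_Ioo h12.le hyc ⟨hy₁, hy₂⟩
    obtain ⟨c, hc1, hc2⟩ := this
    refine ⟨c, ⟨hc1, hc2⟩, ?_⟩
    rintro t ⟨ht, hyt⟩
    exact hmono.injOn ⟨ht.1.le, ht.2.le⟩ ⟨hc1.1.le, hc1.2.le⟩ (hyt.trans hc2.symm)
  · -- y strictly decreasing: apply key lemma to -y
    set z : ℝ → ℝ := fun t => -y t with hz
    have hdz : ∀ t, deriv z t = -deriv y t := fun t => deriv.neg
    have hgz : (fun s => r s * deriv z s) = fun s => -(r s * deriv y s) := by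
      funext s; rw [hdz]; ring
    obtain ⟨hz₁, hz₂⟩ := key_lemma a b r w q z lam heff
      (fun t ht => (hy t ht).neg)
      (fun t ht => by rw [hgz]; exact (hry' t ht).neg)
      (fun t ht => by
        rw [hgz]
        have := hode t ht
        rw [deriv.fun_neg]
        simp only [hz]
        linarith)
      t₁ t₂ ht₁ ht₂ h12 (by rw [hdz, hs₁, neg_zero]) (by rw [hdz, hs₂, neg_zero])
      (fun t ht => by rw [hdz]; exact neg_pos.2 (hneg t ht))
    have hy₁ : 0 < y t₁ := by simpa [hz] using hz₁
    have hy₂ : y t₂ < 0 := by simpa [hz] using hz₂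
    have hanti : StrictAntiOn y (Icc t₁ t₂) := by
      apply strictAntiOn_of_deriv_neg (convex_Icc _ _) hyc
      intro t ht; rw [interior_Icc] at ht; exact hneg t ht
    have : (0:ℝ) ∈ y '' Ioo t₁ t₂ := intermediate_value_Ioo' h12.le hyc ⟨hy₂, hy₁⟩
    obtain ⟨c, hc1, hc2⟩ := this
    refine ⟨c, ⟨hc1, hc2⟩, ?_⟩
    rintro t ⟨ht, hyt⟩
    exact hanti.injOn ⟨ht.1.le, ht.2.le⟩ ⟨hc1.1.le, hc1.2.le⟩ (hyt.trans hc2.symm)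
end

section
/- Let $y$ be a nontrivial twice differentiable solution of $(ry')' + \lambda w y = 0$ on $(a,b)$ with $r,w$ continuous, $r,w > 0$, $\lambda > 0$. Suppose $y$ has exactly one zero $s_0$ in $(a,b)$ and satisfies $r y' \to 0$ at both endpoints. Then $y$ is strictly monotone on $(a,b)$. -/
open Set Filter

lemma STMT5_aux_right (c b : ℝ) (g : ℝ → ℝ)
    (hg : ∀ t ∈ Ico c b, DifferentiableAt ℝ g t)
    (hg' : ∀ t ∈ Ioo c b, deriv g t < 0)
    (hlim : Tendsto g (nhdsWithin b (Ioo c b)) (nhds 0)) :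
    ∀ t ∈ Ico c b, 0 < g t := by
  intro t ht
  set u := (t + b) / 2 with hu
  have htu : t < u := by dsimp [u]; linarith [ht.2]
  have hub : u < b := by dsimp [u]; linarith [ht.2]
  have hanti : StrictAntiOn g (Ico t b) := by
    apply strictAntiOn_of_deriv_neg (convex_Ico t b)
    · exact fun v hv => (hg v ⟨ht.1.trans hv.1, hv.2⟩).continuousAt.continuousWithinAt
    · intro x hx
      rw [interior_Ico] at hx
      exact hg' x ⟨lt_of_le_of_lt ht.1 hx.1, hx.2⟩
  have hcb : c < b := ht.1.trans_lt ht.2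
  have hune : (nhdsWithin b (Ioo c b)).NeBot := by
    rw [← mem_closure_iff_nhdsWithin_neBot, closure_Ioo hcb.ne]
    exact right_mem_Icc.2 hcb.le
  have hu_mem : u ∈ Ico t b := ⟨htu.le, hub⟩
  have hgu : 0 ≤ g u := by
    apply le_of_tendsto hlim
    filter_upwards [self_mem_nhdsWithin, mem_nhdsWithin_of_mem_nhds (Ioi_mem_nhds hub)]
      with v hv1 hv2
    exact (hanti hu_mem ⟨htu.le.trans hv2.le, hv1.2⟩ hv2).le
  calc 0 ≤ g u := hgu
    _ < g t := hanti ⟨le_refl t, ht.2⟩ hu_mem htu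

lemma STMT5_aux_left (a c : ℝ) (g : ℝ → ℝ)
    (hg : ∀ t ∈ Ioc a c, DifferentiableAt ℝ g t)
    (hg' : ∀ t ∈ Ioo a c, deriv g t < 0)
    (hlim : Tendsto g (nhdsWithin a (Ioo a c)) (nhds 0)) :
    ∀ t ∈ Ioc a c, g t < 0 := by
  intro t ht
  set u := (a + t) / 2 with hu
  have hau : a < u := by dsimp [u]; linarith [ht.1]
  have hut : u < t := by dsimp [u]; linarith [ht.1]
  have hanti : StrictAntiOn g (Ioc a t) := by
    apply strictAntiOn_of_deriv_neg (convex_Ioc a t)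
    · exact fun v hv => (hg v ⟨hv.1, hv.2.trans ht.2⟩).continuousAt.continuousWithinAt
    · intro x hx
      rw [interior_Ioc] at hx
      exact hg' x ⟨hx.1, hx.2.trans_le ht.2⟩
  have hac : a < c := ht.1.trans_le ht.2
  have hune : (nhdsWithin a (Ioo a c)).NeBot := by
    rw [← mem_closure_iff_nhdsWithin_neBot, closure_Ioo hac.ne]
    exact left_mem_Icc.2 hac.le
  have hu_mem : u ∈ Ioc a t := ⟨hau, hut.le⟩
  have hgu : g u ≤ 0 := by
    apply ge_of_tendsto hlim
    filter_upwards [self_mem_nhdsWithin, mem_nhdsWithin_of_mem_nhds (Iio_mem_nhds hau)]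
      with v hv1 hv2
    exact (hanti ⟨hv1.1, (hv2.trans hut).le⟩ hu_mem hv2).le
  calc g t < g u := hanti hu_mem ⟨ht.1, le_refl t⟩ hut
    _ ≤ 0 := hgu

/-- A nontrivial solution of `(r y')' + λ w y = 0` with exactly one zero and
Neumann-type boundary behavior `r y' → 0` at both endpoints is strictly
monotone on `(a, b)`. -/
theorem stmt_5 (a b : ℝ) (hab : a < b) (r w y : ℝ → ℝ) (lam : ℝ)
    (hr : ContinuousOn r (Ioo a b)) (hrpos : ∀ t ∈ Ioo a b, 0 < r t)
    (hw : ContinuousOn w (Ioo a b)) (hwpos : ∀ t ∈ Ioo a b, 0 < w t)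
    (hlam : 0 < lam)
    (hy : ∀ t ∈ Ioo a b, DifferentiableAt ℝ y t)
    (hy' : ∀ t ∈ Ioo a b, DifferentiableAt ℝ (deriv y) t)
    (hry' : ∀ t ∈ Ioo a b, DifferentiableAt ℝ (fun s => r s * deriv y s) t)
    (hode : ∀ t ∈ Ioo a b,
      deriv (fun s => r s * deriv y s) t + lam * w t * y t = 0)
    (hnontriv : ∃ t ∈ Ioo a b, y t ≠ 0)
    (s₀ : ℝ) (hs₀ : s₀ ∈ Ioo a b) (hzero : y s₀ = 0)
    (huniq : ∀ t ∈ Ioo a b, y t = 0 → t = s₀)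
    (hbca : Tendsto (fun t => r t * deriv y t) (nhdsWithin a (Ioo a b)) (nhds 0))
    (hbcb : Tendsto (fun t => r t * deriv y t) (nhdsWithin b (Ioo a b)) (nhds 0)) :
    StrictMonoOn y (Ioo a b) ∨ StrictAntiOn y (Ioo a b) := by
  obtain ⟨has, hsb⟩ := hs₀
  set g := fun s => r s * deriv y s with hgdef
  -- basic subset facts
  have hsubR : Ioo s₀ b ⊆ Ioo a b := fun t ht => ⟨has.trans ht.1, ht.2⟩
  have hsubL : Ioo a s₀ ⊆ Ioo a b := fun t ht => ⟨ht.1, ht.2.trans hsb⟩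
  have hsubR' : Ico s₀ b ⊆ Ioo a b := fun t ht => ⟨has.trans_le ht.1, ht.2⟩
  have hsubL' : Ioc a s₀ ⊆ Ioo a b := fun t ht => ⟨ht.1, ht.2.trans_lt hsb⟩
  have ycont : ContinuousOn y (Ioo a b) :=
    fun t ht => (hy t ht).continuousAt.continuousWithinAt
  have gderiv : ∀ t ∈ Ioo a b, deriv g t = -(lam * w t * y t) := by
    intro t ht
    have := hode t ht
    linarith
  -- limits restricted to subintervals
  have hlimb : Tendsto g (nhdsWithin b (Ioo s₀ b)) (nhds 0) :=
    hbcb.mono_left (nhdsWithin_mono b hsubR)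
  have hlima : Tendsto g (nhdsWithin a (Ioo a s₀)) (nhds 0) :=
    hbca.mono_left (nhdsWithin_mono a hsubL)
  -- nonvanishing away from s₀
  have hne : ∀ t ∈ Ioo a b, t ≠ s₀ → y t ≠ 0 := by
    intro t ht hts hyt
    exact hts (huniq t ht hyt)
  -- sign dichotomy on the right
  have signR : (∀ t ∈ Ioo s₀ b, 0 < y t) ∨ (∀ t ∈ Ioo s₀ b, y t < 0) := by
    by_contra h
    push_neg at h
    obtain ⟨⟨t1, ht1, h1⟩, ⟨t2, ht2, h2⟩⟩ := h
    have h1' : y t1 < 0 :=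
      lt_of_le_of_ne h1 (hne t1 (hsubR ht1) ht1.1.ne')
    have h2' : 0 < y t2 :=
      lt_of_le_of_ne h2 (Ne.symm (hne t2 (hsubR ht2) ht2.1.ne'))
    have hsub : uIcc t1 t2 ⊆ Ioo s₀ b := (ordConnected_Ioo).uIcc_subset ht1 ht2
    have hcont : ContinuousOn y (uIcc t1 t2) := ycont.mono (hsub.trans hsubR)
    have h0 : (0:ℝ) ∈ uIcc (y t1) (y t2) := by
      rw [mem_uIcc]; left; exact ⟨h1'.le, h2'.le⟩
    obtain ⟨c, hc, hyc⟩ := intermediate_value_uIcc hcont h0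
    have hcmem := hsub hc
    exact hcmem.1.ne' (huniq c (hsubR hcmem) hyc)
  -- sign dichotomy on the left
  have signL : (∀ t ∈ Ioo a s₀, 0 < y t) ∨ (∀ t ∈ Ioo a s₀, y t < 0) := by
    by_contra h
    push_neg at h
    obtain ⟨⟨t1, ht1, h1⟩, ⟨t2, ht2, h2⟩⟩ := h
    have h1' : y t1 < 0 :=
      lt_of_le_of_ne h1 (hne t1 (hsubL ht1) ht1.2.ne)
    have h2' : 0 < y t2 :=
      lt_of_le_of_ne h2 (Ne.symm (hne t2 (hsubL ht2) ht2.2.ne))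
    have hsub : uIcc t1 t2 ⊆ Ioo a s₀ := (ordConnected_Ioo).uIcc_subset ht1 ht2
    have hcont : ContinuousOn y (uIcc t1 t2) := ycont.mono (hsub.trans hsubL)
    have h0 : (0:ℝ) ∈ uIcc (y t1) (y t2) := by
      rw [mem_uIcc]; left; exact ⟨h1'.le, h2'.le⟩
    obtain ⟨c, hc, hyc⟩ := intermediate_value_uIcc hcont h0
    have hcmem := hsub hc
    exact hcmem.2.ne (huniq c (hsubL hcmem) hyc)
  -- the four sign conclusions for g
  have gRpos : (∀ t ∈ Ioo s₀ b, 0 < y t) → ∀ t ∈ Ico s₀ b, 0 < g t := by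
    intro hR
    apply STMT5_aux_right s₀ b g (fun t ht => hry' t (hsubR' ht))
    · intro t ht
      have h1 := gderiv t (hsubR ht)
      have h2 := hwpos t (hsubR ht)
      have h3 := hR t ht
      have := mul_pos (mul_pos hlam h2) h3
      linarith
    · exact hlimb
  have gRneg : (∀ t ∈ Ioo s₀ b, y t < 0) → ∀ t ∈ Ico s₀ b, g t < 0 := by
    intro hR
    have key : ∀ t ∈ Ico s₀ b, 0 < -g t := by
      apply STMT5_aux_right s₀ b (fun s => -g s)
        (fun t ht => (hry' t (hsubR' ht)).neg)
      · intro t ht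
        rw [deriv.fun_neg]
        have h1 := gderiv t (hsubR ht)
        have h2 := hwpos t (hsubR ht)
        have h3 := hR t ht
        have := mul_neg_of_pos_of_neg (mul_pos hlam h2) h3
        linarith
      · simpa using hlimb.neg
    intro t ht
    have := key t ht
    linarith
  have gLneg : (∀ t ∈ Ioo a s₀, 0 < y t) → ∀ t ∈ Ioc a s₀, g t < 0 := by
    intro hL
    apply STMT5_aux_left a s₀ g (fun t ht => hry' t (hsubL' ht))
    · intro t ht
      have h1 := gderiv t (hsubL ht)
      have h2 := hwpos t (hsubL ht)
      have h3 := hL t ht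
      have := mul_pos (mul_pos hlam h2) h3
      linarith
    · exact hlima
  have gLpos : (∀ t ∈ Ioo a s₀, y t < 0) → ∀ t ∈ Ioc a s₀, 0 < g t := by
    intro hL
    have key : ∀ t ∈ Ioc a s₀, -g t < 0 := by
      apply STMT5_aux_left a s₀ (fun s => -g s)
        (fun t ht => (hry' t (hsubL' ht)).neg)
      · intro t ht
        rw [deriv.fun_neg]
        have h1 := gderiv t (hsubL ht)
        have h2 := hwpos t (hsubL ht)
        have h3 := hL t ht
        have := mul_neg_of_pos_of_neg (mul_pos hlam h2) h3
        linarith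
      · simpa using hlima.neg
    intro t ht
    have := key t ht
    linarith
  have hs₀L : s₀ ∈ Ioc a s₀ := ⟨has, le_refl s₀⟩
  have hs₀R : s₀ ∈ Ico s₀ b := ⟨le_refl s₀, hsb⟩
  rcases signL with hL | hL <;> rcases signR with hR | hR
  · -- y > 0 both sides: contradiction
    exact absurd (gRpos hR s₀ hs₀R) (by linarith [gLneg hL s₀ hs₀L])
  · -- y > 0 left, y < 0 right: g < 0 everywhere, strictly anti
    right
    have gneg : ∀ t ∈ Ioo a b, g t < 0 := by
      intro t ht
      rcases le_or_gt t s₀ with h | h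
      · exact gLneg hL t ⟨ht.1, h⟩
      · exact gRneg hR t ⟨h.le, ht.2⟩
    apply strictAntiOn_of_deriv_neg (convex_Ioo a b) ycont
    intro t ht
    rw [interior_Ioo] at ht
    have h1 := gneg t ht
    have h2 := hrpos t ht
    have : r t * deriv y t < 0 := h1
    nlinarith
  · -- y < 0 left, y > 0 right: g > 0 everywhere, strictly mono
    left
    have gpos : ∀ t ∈ Ioo a b, 0 < g t := by
      intro t ht
      rcases le_or_gt t s₀ with h | h
      · exact gLpos hL t ⟨ht.1, h⟩
      · exact gRpos hR t ⟨h.le, ht.2⟩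
    apply strictMonoOn_of_deriv_pos (convex_Ioo a b) ycont
    intro t ht
    rw [interior_Ioo] at ht
    have h1 := gpos t ht
    have h2 := hrpos t ht
    have : 0 < r t * deriv y t := h1
    nlinarith
  · -- y < 0 both sides: contradiction
    exact absurd (gLpos hL s₀ hs₀L) (by linarith [gRneg hR s₀ hs₀R])
end

section
/- Let $p : [x_0, \infty) \to \mathbb{R}$ be a continuously differentiable, strictly positive, integrable function with $\int_{x_0}^\infty p < \infty$, let $K : [x_0, \infty) \to \mathbb{R}$ be continuous and strictly positive, and let $g$ be twice differentiable with $g, g' > 0$ near $\infty$, satisfying $(pKg')' = -\lambda p g$ for some $\lambda > 0$, with $\lim_{s\to\infty} p g^2 = 0$, $\lim_{s\to\infty} g = \infty$, $\lim_{s\to\infty} pKg' = 0$, and $g/g'$ bounded near $\infty$. Then $\limsup_{s\to\infty} g\,p\,K\,g' \leq 0$, and since $g\,p\,K\,g' > 0$ near $\infty$, in fact $\lim_{s\to\infty} g\,p\,K\,g' = 0$. -/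
open Set Filter MeasureTheory

/-- Boundary-term vanishing in the case `g, g' > 0` near infinity:
`limsup g p K g' ≤ 0` and hence `g p K g' → 0`. -/
theorem stmt_13 (x₀ : ℝ) (p K g : ℝ → ℝ) (lam : ℝ)
    (hlam : 0 < lam)
    (hp : ∀ s ∈ Ici x₀, DifferentiableAt ℝ p s)
    (hp' : ContinuousOn (deriv p) (Ici x₀))
    (hppos : ∀ s ∈ Ici x₀, 0 < p s)
    (hpint : IntegrableOn p (Ici x₀))
    (hK : ContinuousOn K (Ici x₀)) (hKpos : ∀ s ∈ Ici x₀, 0 < K s)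
    (hg : ∀ s ∈ Ici x₀, DifferentiableAt ℝ g s)
    (hg2 : ∀ s ∈ Ici x₀, DifferentiableAt ℝ (deriv g) s)
    (hgpos : ∀ᶠ s in atTop, 0 < g s ∧ 0 < deriv g s)
    (hode : ∀ s ∈ Ici x₀,
      deriv (fun t => p t * K t * deriv g t) s = -(lam * p s * g s))
    (hpg2 : Tendsto (fun s => p s * g s ^ 2) atTop (nhds 0))
    (hginf : Tendsto g atTop atTop)
    (hpKg' : Tendsto (fun s => p s * K s * deriv g s) atTop (nhds 0))
    (hratio : ∃ C, ∀ᶠ s in atTop, |g s / deriv g s| ≤ C) :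
    limsup (fun s => ((g s * (p s * K s * deriv g s) : ℝ) : EReal)) atTop ≤ 0 ∧
    Tendsto (fun s => g s * (p s * K s * deriv g s)) atTop (nhds 0) := by
  obtain ⟨C, hC⟩ := hratio
  have hev : ∀ᶠ s in atTop, s ∈ Ici x₀ := eventually_ge_atTop x₀
  set f := fun t => p t * K t * deriv g t with hf
  have hG : Tendsto (fun s => (g s)⁻¹) atTop (nhds 0) := hginf.inv_tendsto_atTop
  have hfd : ∀ᶠ s in atTop, HasDerivAt f (-(lam * p s * g s)) s := by
    filter_upwards [hev, hgpos] with s hs hgs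
    have hne : deriv f s ≠ 0 := by
      rw [hode s hs]
      have hp0 := hppos s hs
      simp only [neg_ne_zero]
      exact (mul_pos (mul_pos hlam hp0) hgs.1).ne'
    have hdiff : DifferentiableAt ℝ f s := by
      by_contra h
      exact hne (deriv_zero_of_not_differentiableAt h)
    have h2 := hdiff.hasDerivAt
    rwa [hode s hs] at h2
  have hGd : ∀ᶠ s in atTop, HasDerivAt (fun t => (g t)⁻¹) (-(deriv g s) / g s ^ 2) s := by
    filter_upwards [hev, hgpos] with s hs hgs
    exact ((hg s hs).hasDerivAt).inv hgs.1.ne'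
  have hG'ne : ∀ᶠ s in atTop, -(deriv g s) / g s ^ 2 ≠ 0 := by
    filter_upwards [hgpos] with s hgs
    exact div_ne_zero (neg_ne_zero.mpr hgs.2.ne') (pow_ne_zero 2 hgs.1.ne')
  have hsq : Tendsto (fun s => lam * (p s * g s ^ 2) * (g s / deriv g s)) atTop (nhds 0) := by
    apply squeeze_zero_norm' (a := fun s => (lam * C) * (p s * g s ^ 2))
    · filter_upwards [hev, hgpos, hC] with s hs hgs hCs
      have hp0 : 0 < p s := hppos s hs
      have hx : 0 ≤ p s * g s ^ 2 := by positivity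
      have : ‖lam * (p s * g s ^ 2) * (g s / deriv g s)‖
          = lam * (p s * g s ^ 2) * |g s / deriv g s| := by
        rw [Real.norm_eq_abs, abs_mul, abs_of_nonneg (by positivity : (0:ℝ) ≤ lam * (p s * g s ^ 2))]
      rw [this]
      calc lam * (p s * g s ^ 2) * |g s / deriv g s|
          ≤ lam * (p s * g s ^ 2) * C := by
            apply mul_le_mul_of_nonneg_left hCs (by positivity)
        _ = lam * C * (p s * g s ^ 2) := by ring
    · simpa using (hpg2.const_mul (lam * C))
  have hratio' : Tendsto (fun s => -(lam * p s * g s) / (-(deriv g s) / g s ^ 2))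
      atTop (nhds 0) := by
    apply hsq.congr'
    filter_upwards [hgpos] with s hgs
    have h1 : g s ≠ 0 := hgs.1.ne'
    have h2 : deriv g s ≠ 0 := hgs.2.ne'
    field_simp
  have hlh : Tendsto (fun s => f s / (g s)⁻¹) atTop (nhds 0) :=
    HasDerivAt.lhopital_zero_atTop hfd hGd hG'ne hpKg' hG hratio'
  have htend : Tendsto (fun s => g s * f s) atTop (nhds 0) := by
    apply hlh.congr
    intro s
    rw [div_eq_mul_inv, inv_inv, mul_comm]
  refine ⟨?_, htend⟩
  have hcoe : Tendsto (fun s => ((g s * f s : ℝ) : EReal)) atTop (nhds ((0:ℝ) : EReal)) :=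
    (continuous_coe_real_ereal.tendsto _).comp htend
  rw [show ((0:ℝ) : EReal) = (0 : EReal) by norm_cast] at hcoe
  exact hcoe.limsup_eq.le
end

section
/- Let $p, K : (a,b) \to \mathbb{R}$ be continuously differentiable with $p, K > 0$, $p' \neq 0$ near the endpoint $a$, and $p(s) \to 0$ as $s \to a^+$. Let $g$ be differentiable with $g p K g'$ bounded near $a$ and suppose $\lim_{s\to a^+} \frac{K(s)|p'(s)|}{p(s)} = \infty$. Then $\lim_{s \to a^+} p(s) g(s)^2 = 0$. -/
open Set Filter

/-- Core estimate of the lemma on vanishing of `p g²` at a singular endpoint: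
if `g p K g'` is bounded near `a`, `p → 0`, `p' ≠ 0` near `a` and
`K |p'| / p → ∞` at `a`, then `p g² → 0` at `a`. -/
theorem stmt_15 (a b : ℝ) (hab : a < b) (p K g : ℝ → ℝ)
    (hp : ∀ s ∈ Ioo a b, DifferentiableAt ℝ p s) (hppos : ∀ s ∈ Ioo a b, 0 < p s)
    (hK : ∀ s ∈ Ioo a b, DifferentiableAt ℝ K s) (hKpos : ∀ s ∈ Ioo a b, 0 < K s)
    (hp'ne : ∀ᶠ s in nhdsWithin a (Ioo a b), deriv p s ≠ 0)
    (hp0 : Tendsto p (nhdsWithin a (Ioo a b)) (nhds 0))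
    (hg : ∀ s ∈ Ioo a b, DifferentiableAt ℝ g s)
    (hbd : ∃ C, ∀ᶠ s in nhdsWithin a (Ioo a b),
      |g s * (p s * K s * deriv g s)| ≤ C)
    (hdiv : Tendsto (fun s => K s * |deriv p s| / p s)
      (nhdsWithin a (Ioo a b)) atTop) :
    Tendsto (fun s => p s * g s ^ 2) (nhdsWithin a (Ioo a b)) (nhds 0) := by
  obtain ⟨C₀, hbd⟩ := hbd
  set C : ℝ := max C₀ 0 with hCdef
  have hC0 : (0:ℝ) ≤ C := le_max_right _ _
  have hbd' : ∀ᶠ s in nhdsWithin a (Ioo a b), |g s * (p s * K s * deriv g s)| ≤ C :=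
    hbd.mono fun s h => h.trans (le_max_left _ _)
  have hEq : nhdsWithin a (Ioo a b) = nhdsWithin a (Ioi a) :=
    nhdsWithin_Ioo_eq_nhdsGT hab
  rw [hEq] at hp'ne hp0 hbd' hdiv ⊢
  rw [Metric.tendsto_nhds]
  intro ε hε
  set δ : ℝ := ε / 4 with hδdef
  have hδ : 0 < δ := by positivity
  -- gather the eventual properties
  have hmem : ∀ᶠ s in nhdsWithin a (Ioi a), s ∈ Ioo a b := by
    rw [← hEq]; exact eventually_mem_nhdsWithin
  have hdiv' : ∀ᶠ s in nhdsWithin a (Ioi a),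
      2 * C / δ ≤ K s * |deriv p s| / p s := hdiv.eventually_ge_atTop _
  have hall : ∀ᶠ s in nhdsWithin a (Ioi a),
      s ∈ Ioo a b ∧ deriv p s ≠ 0 ∧ |g s * (p s * K s * deriv g s)| ≤ C ∧
        2 * C / δ ≤ K s * |deriv p s| / p s :=
    hmem.and (hp'ne.and (hbd'.and hdiv'))
  rw [eventually_iff, mem_nhdsGT_iff_exists_Ioo_subset] at hall
  obtain ⟨u, hu, hsub⟩ := hall
  set c : ℝ := a + (min u b - a) / 2 with hcdef
  have hac : a < c := by
    have : a < min u b := lt_min hu hab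
    simp only [hcdef]; linarith
  have hcu : c < u := by
    have h1 : a < min u b := lt_min hu hab
    have h2 : min u b ≤ u := min_le_left _ _
    simp only [hcdef]; linarith
  have hcb : c < b := by
    have h1 : a < min u b := lt_min hu hab
    have h2 : min u b ≤ b := min_le_right _ _
    simp only [hcdef]; linarith
  have hIcc : Ioc a c ⊆ Ioo a u := fun s hs => ⟨hs.1, lt_of_le_of_lt hs.2 hcu⟩
  have hP : ∀ s ∈ Ioc a c, s ∈ Ioo a b ∧ deriv p s ≠ 0 ∧
      |g s * (p s * K s * deriv g s)| ≤ C ∧ 2 * C / δ ≤ K s * |deriv p s| / p s :=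
    fun s hs => hsub (hIcc hs)
  have hcmem : c ∈ Ioc a c := ⟨hac, le_refl c⟩
  have hcIoo : c ∈ Ioo a b := (hP c hcmem).1
  -- Darboux: deriv p has constant sign on Ioo a u; it must be positive
  have hder : ∀ x ∈ Ioo a u, HasDerivWithinAt p (deriv p x) (Ioo a u) x := by
    intro x hx
    exact ((hp x (hsub hx).1).hasDerivAt).hasDerivWithinAt
  have hsign := hasDerivWithinAt_forall_lt_or_forall_gt_of_forall_ne
    (convex_Ioo a u) hder (m := 0) (fun x hx => (hsub hx).2.1)
  have hpos : ∀ x ∈ Ioo a u, 0 < deriv p x := by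
    rcases hsign with hneg | hpos
    · -- p strictly decreasing near a contradicts p → 0
      exfalso
      have hanti : StrictAntiOn p (Ioo a u) := by
        apply strictAntiOn_of_deriv_neg (convex_Ioo a u)
        · exact fun x hx => ((hp x (hsub hx).1).continuousAt).continuousWithinAt
        · intro x hx
          rw [interior_Ioo] at hx
          exact hneg x hx
      have hc' : c ∈ Ioo a u := ⟨hac, hcu⟩
      have hpc : 0 < p c := hppos c hcIoo
      have h1 : ∀ᶠ s in nhdsWithin a (Ioi a), p s < p c :=
        hp0.eventually (Iio_mem_nhds hpc)
      have h2 : ∀ᶠ s in nhdsWithin a (Ioi a), s ∈ Ioo a c :=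
        eventually_of_mem (Ioo_mem_nhdsGT_of_mem ⟨le_refl a, hac⟩) (fun x hx => hx)
      obtain ⟨s, hs1, hs2⟩ := (h1.and h2).exists
      have hsIoo : s ∈ Ioo a u := ⟨hs2.1, lt_trans hs2.2 hcu⟩
      exact absurd (hanti hsIoo hc' hs2.2) (not_lt.mpr (le_of_lt hs1))
    · exact hpos
  -- the auxiliary function H = g² - δ/p is monotone on Ioc a c
  set H : ℝ → ℝ := fun s => g s ^ 2 - δ * (p s)⁻¹ with hHdef
  have hHderiv : ∀ x ∈ Ioo a b, HasDerivAt H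
      (2 * g x ^ 1 * deriv g x - δ * (-(deriv p x) / p x ^ 2)) x := by
    intro x hx
    exact (((hg x hx).hasDerivAt).pow 2).sub
      ((((hp x hx).hasDerivAt).inv (ne_of_gt (hppos x hx))).const_mul δ)
  have hmono : MonotoneOn H (Ioc a c) := by
    have hconv : Convex ℝ (Ioc a c) := convex_Ioc a c
    have hcont : ContinuousOn H (Ioc a c) := by
      intro x hx
      exact ((hHderiv x (hP x hx).1).differentiableAt.continuousAt).continuousWithinAt
    have hdiff : DifferentiableOn ℝ H (interior (Ioc a c)) := by
      rw [interior_Ioc]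
      intro x hx
      exact ((hHderiv x (hP x ⟨hx.1, le_of_lt hx.2⟩).1).differentiableAt).differentiableWithinAt
    apply monotoneOn_of_deriv_nonneg hconv hcont hdiff
    intro x hx
    rw [interior_Ioc] at hx
    have hx' : x ∈ Ioc a c := ⟨hx.1, le_of_lt hx.2⟩
    obtain ⟨hxb, hne, hb1, hb2⟩ := hP x hx'
    have hxp := hppos x hxb
    have hxK := hKpos x hxb
    have hxp' : 0 < deriv p x := hpos x (hIcc hx')
    rw [(hHderiv x hxb).deriv]
    have habs : |deriv p x| = deriv p x := abs_of_pos hxp'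
    rw [habs] at hb2
    have hg1 : -C ≤ g x * (p x * K x * deriv g x) := (abs_le.mp hb1).1
    have hb2' : 2 * C / δ ≤ K x * deriv p x / p x := hb2
    have hKey : 2 * C * p x ≤ K x * deriv p x * δ := (div_le_div_iff₀ hδ hxp).mp hb2'
    have h2 : 2 * p x * (-C) ≤ 2 * p x * (g x * (p x * K x * deriv g x)) := by
      nlinarith [hg1, hxp.le]
    have hexpand : (2 * g x ^ 1 * deriv g x - δ * (-(deriv p x) / p x ^ 2)) *
        (p x ^ 2 * K x) = 2 * p x * (g x * (p x * K x * deriv g x)) +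
          δ * (deriv p x * K x) := by
      field_simp
      ring
    nlinarith [mul_pos (mul_pos hxp hxp) hxK, hg1, hKey, hexpand, h2]
  -- conclude: for s ∈ Ioo a c, p s * g s ^ 2 ≤ δ + p s * g c ^ 2
  have hbound : ∀ s ∈ Ioo a c, p s * g s ^ 2 ≤ δ + p s * g c ^ 2 := by
    intro s hs
    have hs' : s ∈ Ioc a c := ⟨hs.1, le_of_lt hs.2⟩
    have hsb : s ∈ Ioo a b := (hP s hs').1
    have hH := hmono hs' hcmem (le_of_lt hs.2)
    have hsp := hppos s hsb
    have hcp := hppos c hcIoo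
    simp only [hHdef] at hH
    have h1 : g s ^ 2 ≤ g c ^ 2 + δ * (p s)⁻¹ - δ * (p c)⁻¹ := by linarith
    have h2 : 0 < δ * (p c)⁻¹ := by positivity
    have h3 : g s ^ 2 ≤ g c ^ 2 + δ * (p s)⁻¹ := by linarith
    calc p s * g s ^ 2 ≤ p s * (g c ^ 2 + δ * (p s)⁻¹) := by
          exact mul_le_mul_of_nonneg_left h3 (le_of_lt hsp)
      _ = p s * g c ^ 2 + δ * (p s * (p s)⁻¹) := by ring
      _ = δ + p s * g c ^ 2 := by rw [mul_inv_cancel₀ (ne_of_gt hsp)]; ring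
  -- final squeeze
  have hev1 : ∀ᶠ s in nhdsWithin a (Ioi a), s ∈ Ioo a c :=
    eventually_of_mem (Ioo_mem_nhdsGT_of_mem ⟨le_refl a, hac⟩) (fun x hx => hx)
  have hev2 : ∀ᶠ s in nhdsWithin a (Ioi a), p s < δ / (g c ^ 2 + 1) :=
    hp0.eventually (Iio_mem_nhds (by positivity))
  filter_upwards [hev1, hev2] with s hs1 hs2
  have hsb : s ∈ Ioo a b := (hP s ⟨hs1.1, le_of_lt hs1.2⟩).1
  have hsp := hppos s hsb
  have hnonneg : 0 ≤ p s * g s ^ 2 := by positivity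
  have hub := hbound s hs1
  have hgc : (0:ℝ) < g c ^ 2 + 1 := by positivity
  have h4 : p s * g c ^ 2 < δ := by
    have h5 : p s * (g c ^ 2 + 1) < δ := by
      calc p s * (g c ^ 2 + 1) < (δ / (g c ^ 2 + 1)) * (g c ^ 2 + 1) :=
            mul_lt_mul_of_pos_right hs2 hgc
        _ = δ := div_mul_cancel₀ _ (ne_of_gt hgc)
    nlinarith
  rw [Real.dist_eq, sub_zero, abs_of_nonneg hnonneg]
  have : p s * g s ^ 2 ≤ δ + δ := by linarith
  simp only [hδdef] at this ⊢
  linarith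
end
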